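/- Assume ξ and η are mutually singular. Let s ∈ ℝ satisfy ξ{s} > 0 and let u ∈ [0,1). Then τ*(ζ(s) + u·ξ{s}) < ∞ if and only if τ^{1−u}(s) < ∞, and in that case ζ⁻¹(τ*(ζ(s) + u·ξ{s})) = τ^{1−u}(s). -/

import Mathlib

open MeasureTheory
open Set

/-- The purely atomic part `μ^d` of a measure on `ℝ`. -/
noncomputable def atomicPart (μ : Measure ℝ) : Measure ℝ :=
  μ.restrict {t : ℝ | μ {t} ≠ 0}

/-- The diffuse part `μ^c` of a measure on `ℝ`. -/
noncomputable def diffusePart (μ : Measure ℝ) : Measure ℝ :=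
  μ.restrict {t : ℝ | μ {t} = 0}

/-- The time change `ζ`. -/
noncomputable def zeta (ξ η : Measure ℝ) (s : ℝ) : ℝ :=
  if 0 ≤ s then
    s + (atomicPart ξ (Set.Ico 0 s)).toReal + (atomicPart η (Set.Ico 0 s)).toReal
  else
    s - (atomicPart ξ (Set.Ico s 0)).toReal - (atomicPart η (Set.Ico s 0)).toReal

/-- The generalized inverse `ζ⁻¹` of the time change `ζ`. -/
noncomputable def zetaInv (ξ η : Measure ℝ) (t : ℝ) : ℝ :=
  sInf {s : ℝ | t ≤ zeta ξ η s}


set_option linter.unusedSectionVars false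
set_option linter.unusedVariables false

lemma atoms_countable (μ : Measure ℝ) [SFinite μ] : Set.Countable {x : ℝ | μ {x} ≠ 0} := by
  have := MeasureTheory.Measure.countable_meas_pos_of_disjoint_iUnion₀ (μ := μ)
    (As := fun x : ℝ => {x}) (fun i => (measurableSet_singleton i).nullMeasurableSet)
    (fun i j hij => (disjoint_singleton.2 hij).aedisjoint)
  convert this using 1
  ext x
  simp [pos_iff_ne_zero]

lemma atoms_measurable (μ : Measure ℝ) [SFinite μ] : MeasurableSet {x : ℝ | μ {x} ≠ 0} :=
  (atoms_countable μ).measurableSet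

lemma atomicPart_singleton (μ : Measure ℝ) [SFinite μ] (x : ℝ) : atomicPart μ {x} = μ {x} := by
  rw [atomicPart, Measure.restrict_apply (measurableSet_singleton x)]
  by_cases h : μ {x} = 0
  · rw [h]
    exact le_antisymm (le_trans (measure_mono (Set.inter_subset_left)) (le_of_eq h)) zero_le
  · rw [Set.inter_eq_self_of_subset_left]
    simpa using h

lemma diffusePart_singleton (μ : Measure ℝ) (x : ℝ) : diffusePart μ {x} = 0 := by
  rw [diffusePart, Measure.restrict_apply (measurableSet_singleton x)]
  by_cases h : μ {x} = 0
  · exact le_antisymm (le_trans (measure_mono Set.inter_subset_left) (le_of_eq h)) zero_le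
  · have : {x} ∩ {t : ℝ | μ {t} = 0} = ∅ := by
      ext y; simp only [Set.mem_inter_iff, Set.mem_singleton_iff, Set.mem_setOf_eq,
        Set.mem_empty_iff_false, iff_false]
      rintro ⟨rfl, h2⟩; exact h h2
    simp [this]

lemma diffuse_add_atomic (μ : Measure ℝ) [SFinite μ] {S : Set ℝ} (hS : MeasurableSet S) :
    diffusePart μ S + atomicPart μ S = μ S := by
  rw [diffusePart, atomicPart, Measure.restrict_apply hS, Measure.restrict_apply hS]
  have : {t : ℝ | μ {t} = 0} = {t : ℝ | μ {t} ≠ 0}ᶜ := by ext t; simp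
  rw [this, add_comm, ← Set.diff_eq, measure_inter_add_diff S (atoms_measurable μ)]

set_option linter.unusedSectionVars false

open MeasureTheory Set

section B
variable (ξ η μ : Measure ℝ) [IsLocallyFiniteMeasure ξ] [IsLocallyFiniteMeasure η]
  [IsLocallyFiniteMeasure μ]

lemma meas_Ico_ne_top {a b : ℝ} : μ (Set.Ico a b) ≠ ⊤ :=
  ((measure_mono Set.Ico_subset_Icc_self).trans_lt measure_Icc_lt_top).ne

lemma atomicPart_le (S : Set ℝ) : atomicPart μ S ≤ μ S :=
  Measure.le_iff'.1 Measure.restrict_le_self S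

lemma atomicPart_Ico_ne_top {a b : ℝ} : atomicPart μ (Set.Ico a b) ≠ ⊤ :=
  ((atomicPart_le μ _).trans_lt (meas_Ico_ne_top μ).lt_top).ne

lemma singleton_ne_top (x : ℝ) : μ {x} ≠ ⊤ :=
  ((measure_mono (by simp : {x} ⊆ Set.Icc x x)).trans_lt measure_Icc_lt_top).ne

lemma atomic_Ico_add {a b c : ℝ} (hab : a ≤ b) (hbc : b ≤ c) :
    (atomicPart μ (Set.Ico a c)).toReal
      = (atomicPart μ (Set.Ico a b)).toReal + (atomicPart μ (Set.Ico b c)).toReal := by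
  rw [← Set.Ico_union_Ico_eq_Ico hab hbc,
    measure_union ((Set.Ico_disjoint_Ico.2 (inf_le_of_left_le le_sup_right) : Disjoint (Set.Ico a b) (Set.Ico b c))) measurableSet_Ico,
    ENNReal.toReal_add (atomicPart_Ico_ne_top μ) (atomicPart_Ico_ne_top μ)]

end B

section C
variable (ξ η : Measure ℝ) [IsLocallyFiniteMeasure ξ] [IsLocallyFiniteMeasure η]

lemma zeta_add {a b : ℝ} (hab : a ≤ b) :
    zeta ξ η b = zeta ξ η a + (b - a)
      + (atomicPart ξ (Set.Ico a b)).toReal + (atomicPart η (Set.Ico a b)).toReal := by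
  rcases le_or_gt 0 a with h0a | h0a
  · have h0b : 0 ≤ b := le_trans h0a hab
    rw [zeta, zeta, if_pos h0a, if_pos h0b, atomic_Ico_add ξ h0a hab, atomic_Ico_add η h0a hab]
    ring
  · rcases le_or_gt 0 b with h0b | h0b
    · rw [zeta, zeta, if_pos h0b, if_neg (not_le.2 h0a), atomic_Ico_add ξ h0a.le h0b,
        atomic_Ico_add η h0a.le h0b]
      ring
    · rw [zeta, zeta, if_neg (not_le.2 h0a), if_neg (not_le.2 h0b), atomic_Ico_add ξ hab h0b.le,
        atomic_Ico_add η hab h0b.le]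
      ring

lemma zeta_mono : Monotone (zeta ξ η) := by
  intro a b hab
  rw [zeta_add ξ η hab]
  have h1 : (0:ℝ) ≤ (atomicPart ξ (Set.Ico a b)).toReal := ENNReal.toReal_nonneg
  have h2 : (0:ℝ) ≤ (atomicPart η (Set.Ico a b)).toReal := ENNReal.toReal_nonneg
  linarith

lemma zeta_measurable : Measurable (zeta ξ η) := (zeta_mono ξ η).measurable

lemma le_zeta_of_lt {a b : ℝ} (hab : a < b) :
    zeta ξ η a + (ξ {a}).toReal + (η {a}).toReal + (b - a) ≤ zeta ξ η b := by
  rw [zeta_add ξ η hab.le]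
  have key : ∀ (μ : Measure ℝ) [IsLocallyFiniteMeasure μ],
      (μ {a}).toReal ≤ (atomicPart μ (Set.Ico a b)).toReal := by
    intro μ _
    rw [← atomicPart_singleton μ a]
    exact ENNReal.toReal_mono (atomicPart_Ico_ne_top μ)
      (measure_mono (by simp [Set.singleton_subset_iff, hab]))
  have h1 := key ξ; have h2 := key η
  linarith

lemma zeta_strictMono : StrictMono (zeta ξ η) := by
  intro a b hab
  have := le_zeta_of_lt ξ η hab
  have h1 : (0:ℝ) ≤ (ξ {a}).toReal := ENNReal.toReal_nonneg
  have h2 : (0:ℝ) ≤ (η {a}).toReal := ENNReal.toReal_nonneg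
  linarith

end C

section D
variable (ξ η : Measure ℝ) [IsLocallyFiniteMeasure ξ] [IsLocallyFiniteMeasure η]


lemma tendsto_atomic_Ico_right (μ : Measure ℝ) [IsLocallyFiniteMeasure μ] (w : ℝ) :
    Filter.Tendsto (fun n : ℕ => (atomicPart μ (Set.Ico w (w + 1/(n+1)))).toReal)
      Filter.atTop (nhds ((μ {w}).toReal)) := by
  have hmeas : Filter.Tendsto (fun n : ℕ => atomicPart μ (Set.Ico w (w + 1/(n+1))))
      Filter.atTop (nhds (atomicPart μ {w})) := by
    have hinter : ⋂ n : ℕ, Set.Ico w (w + 1/(n+1)) = {w} := by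
      ext x
      simp only [Set.mem_iInter, Set.mem_Ico, Set.mem_singleton_iff]
      constructor
      · intro h
        rcases (h 0) with ⟨h1, _⟩
        rcases eq_or_lt_of_le h1 with heq | hlt
        · exact heq.symm
        · exfalso
          obtain ⟨n, hn⟩ := exists_nat_one_div_lt (sub_pos.2 hlt)
          have := (h n).2
          linarith [hn]
      · rintro rfl
        intro n
        constructor
        · exact le_refl _
        · have : (0:ℝ) < 1/(n+1) := by positivity
          linarith
    have := MeasureTheory.tendsto_measure_iInter_atTop (μ := atomicPart μ)
      (s := fun n : ℕ => Set.Ico w (w + 1/(n+1)))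
      (fun n => measurableSet_Ico.nullMeasurableSet)
      (fun n m hnm => Set.Ico_subset_Ico_right (by
        have h1 : (1:ℝ)/(m+1) ≤ 1/(n+1) := by
          apply one_div_le_one_div_of_le (by positivity)
          exact_mod_cast by omega
        linarith))
      ⟨0, atomicPart_Ico_ne_top μ⟩
    rwa [hinter] at this
  rw [← atomicPart_singleton μ w]
  have hfin : atomicPart μ {w} ≠ ⊤ := by
    rw [atomicPart_singleton μ w]; exact singleton_ne_top μ w
  exact (ENNReal.tendsto_toReal hfin).comp hmeas

lemma tendsto_atomic_Ico_left (μ : Measure ℝ) [IsLocallyFiniteMeasure μ] (w : ℝ) :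
    Filter.Tendsto (fun n : ℕ => (atomicPart μ (Set.Ico (w - 1/(n+1)) w)).toReal)
      Filter.atTop (nhds 0) := by
  have hmeas : Filter.Tendsto (fun n : ℕ => atomicPart μ (Set.Ico (w - 1/(n+1)) w))
      Filter.atTop (nhds (atomicPart μ (⋂ n : ℕ, Set.Ico (w - 1/(n+1)) w))) :=
    MeasureTheory.tendsto_measure_iInter_atTop
      (fun n => measurableSet_Ico.nullMeasurableSet)
      (fun n m hnm => Set.Ico_subset_Ico_left (by
        have h1 : (1:ℝ)/(m+1) ≤ 1/(n+1) := by
          apply one_div_le_one_div_of_le (by positivity)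
          exact_mod_cast by omega
        linarith))
      ⟨0, atomicPart_Ico_ne_top μ⟩
  have hinter : ⋂ n : ℕ, Set.Ico (w - 1/(n+1)) w = ∅ := by
    ext x
    simp only [Set.mem_iInter, Set.mem_Ico, Set.mem_empty_iff_false, iff_false, not_forall]
    by_cases hx : x < w
    · obtain ⟨n, hn⟩ := exists_nat_one_div_lt (sub_pos.2 hx)
      exact ⟨n, by intro h; linarith [h.1]⟩
    · exact ⟨0, by intro h; exact hx h.2⟩
  rw [hinter] at hmeas
  simp only [measure_empty] at hmeas
  have := (ENNReal.tendsto_toReal (by simp : (0:ENNReal) ≠ ⊤)).comp hmeas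
  exact this

lemma zeta_tendsto_right (w : ℝ) :
    Filter.Tendsto (fun n : ℕ => zeta ξ η (w + 1/(n+1))) Filter.atTop
      (nhds (zeta ξ η w + (ξ {w}).toReal + (η {w}).toReal)) := by
  have heq : ∀ n : ℕ, zeta ξ η (w + 1/(n+1)) = zeta ξ η w + 1/(n+1)
      + (atomicPart ξ (Set.Ico w (w + 1/(n+1)))).toReal
      + (atomicPart η (Set.Ico w (w + 1/(n+1)))).toReal := by
    intro n
    have hp : (0:ℝ) < 1/(n+1) := by positivity
    rw [zeta_add ξ η (by linarith : w ≤ w + 1/(n+1))]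
    ring
  have h0 : Filter.Tendsto (fun n : ℕ => 1/((n:ℝ)+1)) Filter.atTop (nhds 0) :=
    tendsto_one_div_add_atTop_nhds_zero_nat
  have hmain := ((Filter.Tendsto.add (tendsto_const_nhds (x := zeta ξ η w)) h0).add
    (tendsto_atomic_Ico_right ξ w)).add (tendsto_atomic_Ico_right η w)
  rw [add_zero] at hmain
  exact Filter.Tendsto.congr (fun n => (heq n).symm) hmain


lemma zeta_tendsto_left (w : ℝ) :
    Filter.Tendsto (fun n : ℕ => zeta ξ η (w - 1/(n+1))) Filter.atTop (nhds (zeta ξ η w)) := by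
  have heq : ∀ n : ℕ, zeta ξ η (w - 1/(n+1)) = zeta ξ η w - 1/(n+1)
      - (atomicPart ξ (Set.Ico (w - 1/(n+1)) w)).toReal
      - (atomicPart η (Set.Ico (w - 1/(n+1)) w)).toReal := by
    intro n
    have hp : (0:ℝ) < 1/(n+1) := by positivity
    have := zeta_add ξ η (by linarith : w - 1/(n+1) ≤ w)
    rw [this]; ring
  have h0 : Filter.Tendsto (fun n : ℕ => 1/((n:ℝ)+1)) Filter.atTop (nhds 0) :=
    tendsto_one_div_add_atTop_nhds_zero_nat
  have hmain := ((Filter.Tendsto.sub (tendsto_const_nhds (x := zeta ξ η w)) h0).sub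
    (tendsto_atomic_Ico_left ξ w)).sub (tendsto_atomic_Ico_left η w)
  rw [sub_zero, sub_zero, sub_zero] at hmain
  exact Filter.Tendsto.congr (fun n => (heq n).symm) hmain

lemma zeta_ge_self_of_nonneg {v : ℝ} (hv : 0 ≤ v) : v ≤ zeta ξ η v := by
  rw [zeta, if_pos hv]
  have h1 : (0:ℝ) ≤ (atomicPart ξ (Set.Ico 0 v)).toReal := ENNReal.toReal_nonneg
  have h2 : (0:ℝ) ≤ (atomicPart η (Set.Ico 0 v)).toReal := ENNReal.toReal_nonneg
  linarith

lemma zeta_le_self_of_neg {v : ℝ} (hv : v < 0) : zeta ξ η v ≤ v := by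
  rw [zeta, if_neg (not_le.2 hv)]
  have h1 : (0:ℝ) ≤ (atomicPart ξ (Set.Ico v 0)).toReal := ENNReal.toReal_nonneg
  have h2 : (0:ℝ) ≤ (atomicPart η (Set.Ico v 0)).toReal := ENNReal.toReal_nonneg
  linarith

lemma zetaInv_set_nonempty (t : ℝ) : {v : ℝ | t ≤ zeta ξ η v}.Nonempty := by
  refine ⟨max t 0, ?_⟩
  have := zeta_ge_self_of_nonneg ξ η (le_max_right t 0)
  simp only [Set.mem_setOf_eq]
  exact le_trans (le_max_left t 0) this

lemma zetaInv_set_bddBelow (t : ℝ) : BddBelow {v : ℝ | t ≤ zeta ξ η v} := by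
  refine ⟨min t 0, fun v hv => ?_⟩
  by_contra hlt
  push_neg at hlt
  have hv0 : v < 0 := lt_of_lt_of_le hlt (min_le_right t 0)
  have h1 := zeta_le_self_of_neg ξ η hv0
  have h2 : v < t := lt_of_lt_of_le hlt (min_le_left t 0)
  simp only [Set.mem_setOf_eq] at hv
  linarith

lemma zeta_zetaInv_le (t : ℝ) : zeta ξ η (zetaInv ξ η t) ≤ t := by
  set w := zetaInv ξ η t with hw
  have key : ∀ n : ℕ, zeta ξ η (w - 1/(n+1)) < t := by
    intro n
    by_contra hc
    push_neg at hc
    have : w ≤ w - 1/(n+1) := csInf_le (zetaInv_set_bddBelow ξ η t) hc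
    have hp : (0:ℝ) < 1/(n+1) := by positivity
    linarith
  exact le_of_tendsto (zeta_tendsto_left ξ η w) (Filter.Eventually.of_forall fun n => (key n).le)

lemma le_zeta_zetaInv_add (t : ℝ) :
    t ≤ zeta ξ η (zetaInv ξ η t) + (ξ {zetaInv ξ η t}).toReal + (η {zetaInv ξ η t}).toReal := by
  set w := zetaInv ξ η t with hw
  have key : ∀ n : ℕ, t ≤ zeta ξ η (w + 1/(n+1)) := by
    intro n
    have hp : (0:ℝ) < 1/(n+1) := by positivity
    have : sInf {v : ℝ | t ≤ zeta ξ η v} < w + 1/(n+1) := by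
      show zetaInv ξ η t < w + 1/(n+1)
      rw [← hw]; linarith
    obtain ⟨v, hv, hvlt⟩ := exists_lt_of_csInf_lt (zetaInv_set_nonempty ξ η t) this
    exact le_trans hv (zeta_mono ξ η hvlt.le)
  exact ge_of_tendsto (zeta_tendsto_right ξ η w) (Filter.Eventually.of_forall key)

lemma zetaInv_mono {t₁ t₂ : ℝ} (h : t₁ ≤ t₂) : zetaInv ξ η t₁ ≤ zetaInv ξ η t₂ :=
  csInf_le_csInf (zetaInv_set_bddBelow ξ η t₁) (zetaInv_set_nonempty ξ η t₂)
    (fun v hv => le_trans h hv)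

lemma sInf_sandwich {w : ℝ} {E : Set ℝ} (h1 : Set.Ioi w ⊆ E) (h2 : E ⊆ Set.Ici w) :
    sInf E = w := by
  refine le_antisymm ?_ (le_csInf ⟨w + 1, h1 (by simp)⟩ (fun x hx => h2 hx))
  have : ∀ ε > (0:ℝ), sInf E ≤ w + ε := fun ε hε =>
    csInf_le ⟨w, fun x hx => h2 hx⟩ (h1 (by simp [hε]))
  by_contra hc
  push_neg at hc
  have := this ((sInf E - w)/2) (by linarith)
  linarith

lemma zetaInv_of_mem_jump {w t : ℝ} (h1 : zeta ξ η w ≤ t)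
    (h2 : t ≤ zeta ξ η w + (ξ {w}).toReal + (η {w}).toReal) : zetaInv ξ η t = w := by
  apply sInf_sandwich
  · intro v hv
    simp only [Set.mem_Ioi] at hv
    simp only [Set.mem_setOf_eq]
    have := le_zeta_of_lt ξ η hv
    linarith
  · intro v hv
    simp only [Set.mem_setOf_eq] at hv
    simp only [Set.mem_Ici]
    by_contra hc
    push_neg at hc
    have := zeta_strictMono ξ η hc
    linarith


end D

/-- The stretched measure `μ*` built from `μ` using the time change `ζ` of `(ξ, η)`. -/
noncomputable def starM (ξ η μ : Measure ℝ) : Measure ℝ :=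
  (diffusePart μ).map (zeta ξ η) +
    (atomicPart μ).bind fun t =>
      (μ {t})⁻¹ • volume.restrict (Set.Icc (zeta ξ η t) (zeta ξ η t + (μ {t}).toReal))


lemma measurable_of_zero_off_countable {h : ℝ → ENNReal} {A : Set ℝ} (hA : A.Countable)
    (h0 : ∀ x ∉ A, h x = 0) : Measurable h := by
  intro S hS
  by_cases hz : (0 : ENNReal) ∈ S
  · have heq : h ⁻¹' S = (A ∩ h ⁻¹' S) ∪ Aᶜ := by
      ext x
      by_cases hx : x ∈ A
      · simp [hx]
      · simp [hx, Set.mem_preimage, h0 x hx, hz]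
    rw [heq]
    exact ((hA.mono Set.inter_subset_left).measurableSet).union hA.measurableSet.compl
  · have heq : h ⁻¹' S = A ∩ h ⁻¹' S := by
      ext x
      by_cases hx : x ∈ A
      · simp [hx]
      · simp only [Set.mem_preimage, Set.mem_inter_iff, hx, false_and, iff_false]
        rw [h0 x hx]
        exact hz
    rw [heq]
    exact (hA.mono Set.inter_subset_left).measurableSet

section E
variable (ξ η : Measure ℝ) [IsLocallyFiniteMeasure ξ] [IsLocallyFiniteMeasure η]

lemma starM_apply (μ : Measure ℝ) [IsLocallyFiniteMeasure μ] {S : Set ℝ} (hS : MeasurableSet S) :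
    starM ξ η μ S = diffusePart μ ((zeta ξ η) ⁻¹' S)
      + ∫⁻ t in {x : ℝ | μ {x} ≠ 0},
          (μ {t})⁻¹ * volume (S ∩ Set.Icc (zeta ξ η t) (zeta ξ η t + (μ {t}).toReal)) ∂μ := by
  set A := {x : ℝ | μ {x} ≠ 0} with hA
  have hAm : MeasurableSet A := atoms_measurable μ
  set k : ℝ → Measure ℝ := fun t =>
    (μ {t})⁻¹ • volume.restrict (Set.Icc (zeta ξ η t) (zeta ξ η t + (μ {t}).toReal)) with hk
  set g : ℝ → Measure ℝ := fun t => if t ∈ A then k t else 0 with hg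
  have hgm : Measurable g := by
    apply Measure.measurable_of_measurable_coe
    intro T hT
    have : (fun b => g b T) = fun b => if b ∈ A then k b T else 0 := by
      funext b
      by_cases hb : b ∈ A <;> simp [hg, hb]
    rw [this]
    exact measurable_of_zero_off_countable (atoms_countable μ)
      (fun x hx => by show (if x ∈ A then k x T else 0) = 0; rw [if_neg (by rwa [hA])])
  have hae : k =ᵐ[atomicPart μ] g := by
    have hnull : (atomicPart μ) Aᶜ = 0 := by
      rw [atomicPart, Measure.restrict_apply hAm.compl, ← hA, Set.compl_inter_self, measure_empty]
    have hmem : A ∈ ae (atomicPart μ) := by rw [mem_ae_iff]; simpa using hnull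
    exact Filter.eventuallyEq_of_mem hmem (fun x hx => by simp [hg, hx])
  have hbind : (atomicPart μ).bind k = (atomicPart μ).bind g := by
    unfold Measure.bind
    rw [Measure.map_congr hae]
  rw [starM, Measure.add_apply, Measure.map_apply (zeta_measurable ξ η) hS]
  congr 1
  rw [show (fun t => (μ {t})⁻¹ • volume.restrict
      (Set.Icc (zeta ξ η t) (zeta ξ η t + (μ {t}).toReal))) = k from rfl, hbind,
    Measure.bind_apply hS hgm.aemeasurable]
  rw [atomicPart]
  rw [setLIntegral_congr_fun_ae hAm (Filter.Eventually.of_forall (fun x hx => ?_))]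
  simp only [hg, if_pos hx, hk]
  rw [Measure.smul_apply, Measure.restrict_apply hS, smul_eq_mul]
end E

lemma inv_mul_mul_cancel {a x : ENNReal} (ha0 : a ≠ 0) (hat : a ≠ ⊤) : a⁻¹ * x * a = x := by
  rw [mul_comm a⁻¹ x, mul_assoc, ENNReal.inv_mul_cancel ha0 hat, mul_one]

section ML
variable (ξ η : Measure ℝ) [IsLocallyFiniteMeasure ξ] [IsLocallyFiniteMeasure η]

lemma toReal_singleton_le (μ : Measure ℝ) [IsLocallyFiniteMeasure μ]
    (hμjump : ∀ x : ℝ, μ {x} ≤ ξ {x} + η {x}) (v : ℝ) :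
    (μ {v}).toReal ≤ (ξ {v}).toReal + (η {v}).toReal := by
  rw [← ENNReal.toReal_add (singleton_ne_top ξ v) (singleton_ne_top η v)]
  exact ENNReal.toReal_mono
    (by rw [Ne, ENNReal.add_eq_top]; push_neg
        exact ⟨singleton_ne_top ξ v, singleton_ne_top η v⟩) (hμjump v)

lemma ML (μ : Measure ℝ) [IsLocallyFiniteMeasure μ]
    (hμjump : ∀ x : ℝ, μ {x} ≤ ξ {x} + η {x})
    {s u : ℝ} (hμs : μ {s} = ξ {s} ∨ μ {s} = 0)
    (hξs : ξ {s} ≠ 0) (hu0 : 0 ≤ u) (hu1 : u < 1)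
    {w t : ℝ} (hws : s < w) (h1 : zeta ξ η w ≤ t)
    (h2 : t ≤ zeta ξ η w + (ξ {w}).toReal + (η {w}).toReal) :
    starM ξ η μ (Set.Icc (zeta ξ η s + u * (ξ {s}).toReal) t)
      = ENNReal.ofReal ((μ {s}).toReal - u * (ξ {s}).toReal)
        + μ (Set.Ioo s w)
        + (μ {w})⁻¹ * ENNReal.ofReal (min (t - zeta ξ η w) ((μ {w}).toReal)) * μ {w} := by
  set Z := zeta ξ η with hZ
  set Jξ : ℝ := (ξ {s}).toReal with hJ
  set r : ℝ := Z s + u * Jξ with hr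
  have hJpos : 0 < Jξ := ENNReal.toReal_pos hξs (singleton_ne_top ξ s)
  have hrs : Z s ≤ r := by nlinarith
  have hre : r < Z s + Jξ := by nlinarith
  -- basic position facts
  have hgt : ∀ v, s < v → r < Z v := by
    intro v hv
    have := le_zeta_of_lt ξ η hv
    have h0 : (0:ℝ) ≤ (η {s}).toReal := ENNReal.toReal_nonneg
    rw [← hZ, ← hJ] at this
    nlinarith
  have hwt : Z s + Jξ ≤ t := by
    have := le_zeta_of_lt ξ η hws
    have h0 : (0:ℝ) ≤ (η {s}).toReal := ENNReal.toReal_nonneg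
    rw [← hZ, ← hJ] at this
    nlinarith
  have hlt : ∀ v, v < s → Z v + (μ {v}).toReal < r := by
    intro v hv
    have := le_zeta_of_lt ξ η hv
    rw [← hZ] at this
    have h3 := toReal_singleton_le ξ η μ hμjump v
    nlinarith
  have hgtw : ∀ v, w < v → t < Z v := by
    intro v hv
    have := le_zeta_of_lt ξ η hv
    rw [← hZ] at this
    nlinarith
  have hmid : ∀ v, s < v → v < w → Z v + (μ {v}).toReal ≤ Z w := by
    intro v hv1 hv2
    have := le_zeta_of_lt ξ η hv2
    rw [← hZ] at this
    have h3 := toReal_singleton_le ξ η μ hμjump v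
    nlinarith
  rw [starM_apply ξ η μ measurableSet_Icc]
  -- diffuse part
  have hdiff : diffusePart μ (Z ⁻¹' Set.Icc r t) = diffusePart μ (Set.Ioo s w) := by
    have h1d : diffusePart μ (Z ⁻¹' Set.Icc r t) = diffusePart μ (Set.Ioc s w) := by
      apply measure_congr
      rw [Filter.eventuallyEq_set]
      have hnull : ∀ᵐ x ∂(diffusePart μ), x ≠ s := by
        have h0 : diffusePart μ {x : ℝ | x = s} = 0 := by
          rw [show {x : ℝ | x = s} = ({s} : Set ℝ) from by ext x; simp]
          exact diffusePart_singleton μ s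
        rw [ae_iff]; push_neg; exact h0
      filter_upwards [hnull] with v hvs
      simp only [Set.mem_preimage, Set.mem_Icc, Set.mem_Ioc]
      constructor
      · rintro ⟨hrv, hvt⟩
        rcases lt_trichotomy v s with hv | hv | hv
        · exfalso
          have : Z v < Z s := zeta_strictMono ξ η hv
          linarith
        · exact absurd hv hvs
        · refine ⟨hv, ?_⟩
          by_contra hc
          push_neg at hc
          exact absurd hvt (not_le.2 (hgtw v hc))
      · rintro ⟨hsv, hvw⟩
        exact ⟨(hgt v hsv).le, le_trans (zeta_mono ξ η hvw) h1⟩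
    rw [h1d, ← Set.Ioo_union_right hws,
      measure_union (Set.disjoint_singleton_right.2 (by simp)) (measurableSet_singleton w),
      diffusePart_singleton, add_zero]
  rw [hdiff, ← hZ]
  have hAm : MeasurableSet {x : ℝ | μ {x} ≠ 0} := atoms_measurable μ
  set f : ℝ → ENNReal := fun v =>
    (μ {v})⁻¹ * volume (Set.Icc r t ∩ Set.Icc (Z v) (Z v + (μ {v}).toReal)) with hf
  have key0 : ∀ v ∉ Set.Icc s w, f v = 0 := by
    intro v hv
    rw [Set.mem_Icc, not_and_or] at hv
    have hempty : Set.Icc r t ∩ Set.Icc (Z v) (Z v + (μ {v}).toReal) = ∅ := by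
      rw [Set.Icc_inter_Icc]
      apply Set.Icc_eq_empty
      rcases hv with hv | hv
      · push_neg at hv
        have := hlt v hv
        have h4 : r ≤ max r (Z v) := le_max_left _ _
        have h5 : min t (Z v + (μ {v}).toReal) ≤ Z v + (μ {v}).toReal := min_le_right _ _
        intro hc; simp only [sup_le_iff, le_inf_iff] at hc; linarith [hc.1.2, hc.2.1]
      · push_neg at hv
        have := hgtw v hv
        intro hc; simp only [sup_le_iff, le_inf_iff] at hc; linarith [hc.1.1, hc.2.2]
    rw [hf]
    simp only [hempty, measure_empty, mul_zero]
  have hsplit : ∫⁻ v in {x : ℝ | μ {x} ≠ 0}, f v ∂μ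
      = ∫⁻ v in Set.Icc s w, f v ∂(μ.restrict {x : ℝ | μ {x} ≠ 0}) := by
    have := lintegral_add_compl f (measurableSet_Icc (a := s) (b := w))
      (μ := μ.restrict {x : ℝ | μ {x} ≠ 0})
    rw [show (∫⁻ v in {x : ℝ | μ {x} ≠ 0}, f v ∂μ)
      = ∫⁻ v, f v ∂(μ.restrict {x : ℝ | μ {x} ≠ 0}) from rfl, ← this]
    have hz : ∫⁻ v in (Set.Icc s w)ᶜ, f v ∂(μ.restrict {x : ℝ | μ {x} ≠ 0}) = 0 := by
      rw [setLIntegral_congr_fun_ae measurableSet_Icc.compl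
        (Filter.Eventually.of_forall (fun v hv => key0 v hv))]
      simp
    rw [hz, add_zero]
  have hAae : ∀ᵐ v ∂(μ.restrict {x : ℝ | μ {x} ≠ 0}), μ {v} ≠ 0 := by
    rw [ae_iff]
    have hset : {a : ℝ | ¬ μ {a} ≠ 0} = {x : ℝ | μ {x} ≠ 0}ᶜ := by ext x; simp
    rw [hset, Measure.restrict_apply hAm.compl, Set.compl_inter_self, measure_empty]
  have piece2 : ∫⁻ v in Set.Ioo s w, f v ∂(μ.restrict {x : ℝ | μ {x} ≠ 0})
      = atomicPart μ (Set.Ioo s w) := by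
    rw [setLIntegral_congr_fun_ae measurableSet_Ioo ?_, setLIntegral_one]
    · rfl
    · filter_upwards [hAae] with v hv hvIoo
      obtain ⟨hsv, hvw⟩ := hvIoo
      have hfin := singleton_ne_top μ v
      have hZv := hgt v hsv
      have hup := le_trans (hmid v hsv hvw) h1
      rw [hf]
      simp only
      rw [Set.Icc_inter_Icc, max_eq_right hZv.le, min_eq_right hup, Real.volume_Icc,
        add_sub_cancel_left, ENNReal.ofReal_toReal hfin, ENNReal.inv_mul_cancel hv hfin]
  have piece1 : ∫⁻ v in {s}, f v ∂(μ.restrict {x : ℝ | μ {x} ≠ 0})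
      = ENNReal.ofReal ((μ {s}).toReal - u * Jξ) := by
    rw [lintegral_singleton,
      show (μ.restrict {x : ℝ | μ {x} ≠ 0}) {s} = atomicPart μ {s} from rfl,
      atomicPart_singleton]
    rcases hμs with heq | h0
    · rw [hf]
      simp only
      rw [heq]
      rw [Set.Icc_inter_Icc, max_eq_left hrs, min_eq_right (by rw [← hJ]; exact hwt),
        Real.volume_Icc, inv_mul_mul_cancel hξs (singleton_ne_top ξ s)]
      congr 1
      rw [← hJ, hr]
      ring
    · rw [h0, mul_zero]
      simp only [ENNReal.toReal_zero, zero_sub]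
      rw [ENNReal.ofReal_of_nonpos (by nlinarith)]
  have piece3 : ∫⁻ v in {w}, f v ∂(μ.restrict {x : ℝ | μ {x} ≠ 0})
      = (μ {w})⁻¹ * ENNReal.ofReal (min (t - Z w) ((μ {w}).toReal)) * μ {w} := by
    rw [lintegral_singleton,
      show (μ.restrict {x : ℝ | μ {x} ≠ 0}) {w} = atomicPart μ {w} from rfl,
      atomicPart_singleton, hf]
    simp only
    rw [Set.Icc_inter_Icc, max_eq_right (hgt w hws).le, Real.volume_Icc]
    congr 2
    rcases le_total (t - Z w) ((μ {w}).toReal) with hcm | hcm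
    · rw [min_eq_left hcm, min_eq_left (by linarith : t ≤ Z w + (μ {w}).toReal)]
    · rw [min_eq_right hcm, min_eq_right (by linarith : Z w + (μ {w}).toReal ≤ t)]
      ring
  rw [hsplit, ← Set.Ioc_insert_left hws.le, Set.insert_eq,
    lintegral_union measurableSet_Ioc (Set.disjoint_singleton_left.2 (by simp)),
    ← Set.Ioo_union_right hws,
    lintegral_union (measurableSet_singleton w) (Set.disjoint_singleton_right.2 (by simp)),
    piece1, piece2, piece3, ← diffuse_add_atomic μ measurableSet_Ioo]
  ring

end ML

section A2
variable (ξ η : Measure ℝ) [IsLocallyFiniteMeasure ξ] [IsLocallyFiniteMeasure η]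

lemma starM_eta_small {s u : ℝ} (ηs0 : η {s} = 0) (hξs : ξ {s} ≠ 0) (hu0 : 0 ≤ u)
    {t : ℝ} (ht : t ≤ zeta ξ η s + (ξ {s}).toReal) :
    starM ξ η η (Set.Icc (zeta ξ η s + u * (ξ {s}).toReal) t) = 0 := by
  set Z := zeta ξ η with hZ
  set Jξ : ℝ := (ξ {s}).toReal with hJ
  set r : ℝ := Z s + u * Jξ with hr
  have hJ0 : 0 ≤ Jξ := ENNReal.toReal_nonneg
  have hrs : Z s ≤ r := by nlinarith
  rw [starM_apply ξ η η measurableSet_Icc, ← hZ]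
  have hd : diffusePart η (Z ⁻¹' Set.Icc r t) = 0 := by
    apply measure_mono_null (by
      intro v hv
      simp only [Set.mem_preimage, Set.mem_Icc] at hv
      simp only [Set.mem_singleton_iff]
      rcases lt_trichotomy v s with hvs | hvs | hvs
      · exfalso
        have := zeta_strictMono ξ η hvs
        rw [← hZ] at this
        linarith [hv.1]
      · exact hvs
      · exfalso
        have := le_zeta_of_lt ξ η hvs
        rw [← hZ, ← hJ] at this
        have h0 : (0:ℝ) ≤ (η {s}).toReal := ENNReal.toReal_nonneg
        linarith [hv.2] : Z ⁻¹' Set.Icc r t ⊆ {s}) (diffusePart_singleton η s)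
  have hAm : MeasurableSet {x : ℝ | η {x} ≠ 0} := atoms_measurable η
  have hAae : ∀ᵐ v ∂(η.restrict {x : ℝ | η {x} ≠ 0}), η {v} ≠ 0 := by
    rw [ae_iff]
    have hset : {a : ℝ | ¬ η {a} ≠ 0} = {x : ℝ | η {x} ≠ 0}ᶜ := by ext x; simp
    rw [hset, Measure.restrict_apply hAm.compl, Set.compl_inter_self, measure_empty]
  have hi : ∫⁻ v in {x : ℝ | η {x} ≠ 0},
      (η {v})⁻¹ * volume (Set.Icc r t ∩ Set.Icc (Z v) (Z v + (η {v}).toReal)) ∂η = 0 := by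
    rw [lintegral_congr_ae (g := fun _ => 0) ?_, lintegral_zero]
    filter_upwards [hAae] with v hv
    have hvs : v ≠ s := fun hc => hv (hc ▸ ηs0)
    have hempty : Set.Icc r t ∩ Set.Icc (Z v) (Z v + (η {v}).toReal) = ∅ := by
      rw [Set.Icc_inter_Icc]
      apply Set.Icc_eq_empty
      rcases lt_or_gt_of_ne hvs with hlt | hgt
      · have := le_zeta_of_lt ξ η hlt
        rw [← hZ] at this
        have h4 : (0:ℝ) ≤ (ξ {v}).toReal := ENNReal.toReal_nonneg
        intro hc; simp only [sup_le_iff, le_inf_iff] at hc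
        linarith [hc.1.1, hc.2.2]
      · have := le_zeta_of_lt ξ η hgt
        rw [← hZ, ← hJ] at this
        have h0 : (0:ℝ) ≤ (η {s}).toReal := ENNReal.toReal_nonneg
        intro hc; simp only [sup_le_iff, le_inf_iff] at hc
        linarith [hc.1.2, hc.2.1]
    simp [hempty]
  rw [hd, hi, add_zero]

lemma starM_xi_lower {s u : ℝ} (hξs : ξ {s} ≠ 0) (hu0 : 0 ≤ u)
    {t : ℝ} (hrt : zeta ξ η s + u * (ξ {s}).toReal ≤ t)
    (ht : t ≤ zeta ξ η s + (ξ {s}).toReal) :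
    ENNReal.ofReal (t - (zeta ξ η s + u * (ξ {s}).toReal))
      ≤ starM ξ η ξ (Set.Icc (zeta ξ η s + u * (ξ {s}).toReal) t) := by
  set Z := zeta ξ η with hZ
  set Jξ : ℝ := (ξ {s}).toReal with hJ
  set r : ℝ := Z s + u * Jξ with hr
  have hJ0 : 0 ≤ Jξ := ENNReal.toReal_nonneg
  have hrs : Z s ≤ r := by nlinarith
  rw [starM_apply ξ η ξ measurableSet_Icc, ← hZ]
  set f : ℝ → ENNReal := fun v =>
    (ξ {v})⁻¹ * volume (Set.Icc r t ∩ Set.Icc (Z v) (Z v + (ξ {v}).toReal)) with hf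
  have key : ENNReal.ofReal (t - r) = f s * (ξ.restrict {x : ℝ | ξ {x} ≠ 0}) {s} := by
    rw [show (ξ.restrict {x : ℝ | ξ {x} ≠ 0}) {s} = atomicPart ξ {s} from rfl,
      atomicPart_singleton, hf]
    simp only
    rw [Set.Icc_inter_Icc, max_eq_left hrs, min_eq_left (by rw [← hJ]; exact ht),
      Real.volume_Icc, inv_mul_mul_cancel hξs (singleton_ne_top ξ s)]
  calc ENNReal.ofReal (t - r) = f s * (ξ.restrict {x : ℝ | ξ {x} ≠ 0}) {s} := key
    _ = ∫⁻ v in {s}, f v ∂(ξ.restrict {x : ℝ | ξ {x} ≠ 0}) := (lintegral_singleton f s).symm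
    _ ≤ ∫⁻ v, f v ∂(ξ.restrict {x : ℝ | ξ {x} ≠ 0}) := setLIntegral_le_lintegral _ _
    _ ≤ diffusePart ξ (Z ⁻¹' Set.Icc r t) + ∫⁻ v in {x : ℝ | ξ {x} ≠ 0}, f v ∂ξ :=
        le_add_self

end A2

section MAIN
variable (ξ η : Measure ℝ) [IsLocallyFiniteMeasure ξ] [IsLocallyFiniteMeasure η]

lemma ofReal_c_eq {s u : ℝ} (hu1 : u ≤ 1) :
    ENNReal.ofReal (1 - u) * ξ {s} = ENNReal.ofReal ((ξ {s}).toReal - u * (ξ {s}).toReal) := by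
  conv_lhs => rw [show ξ {s} = ENNReal.ofReal ((ξ {s}).toReal) from
    (ENNReal.ofReal_toReal (singleton_ne_top ξ s)).symm]
  rw [← ENNReal.ofReal_mul (by linarith)]
  congr 1; ring

lemma eta_Icc_eq {s w : ℝ} (ηs0 : η {s} = 0) (hsw : s < w) :
    η (Set.Icc s w) = η (Set.Ioo s w) + η {w} := by
  rw [← Set.Ioc_insert_left hsw.le, Set.insert_eq,
    measure_union (Set.disjoint_singleton_left.2 (by simp)) measurableSet_Ioc, ηs0, zero_add,
    ← Set.Ioo_union_right hsw,
    measure_union (Set.disjoint_singleton_right.2 (by simp)) (measurableSet_singleton w)]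

lemma claim1 {s u : ℝ} (ηs0 : η {s} = 0) (hatoms : ∀ x : ℝ, ξ {x} = 0 ∨ η {x} = 0)
    (hξs : ξ {s} ≠ 0) (hu0 : 0 ≤ u) (hu1 : u < 1) {w : ℝ} (hsw : s < w)
    (hcond : ENNReal.ofReal (1 - u) * ξ {s} + ξ (Set.Ioo s w) ≤ η (Set.Icc s w)) :
    (zeta ξ η s + u * (ξ {s}).toReal < zeta ξ η w + (η {w}).toReal
      ∧ starM ξ η ξ (Set.Icc (zeta ξ η s + u * (ξ {s}).toReal) (zeta ξ η w + (η {w}).toReal))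
        ≤ starM ξ η η (Set.Icc (zeta ξ η s + u * (ξ {s}).toReal) (zeta ξ η w + (η {w}).toReal)))
    ∧ zetaInv ξ η (zeta ξ η w + (η {w}).toReal) = w := by
  have hJpos : 0 < (ξ {s}).toReal := ENNReal.toReal_pos hξs (singleton_ne_top ξ s)
  have hη0 : (0:ℝ) ≤ (η {w}).toReal := ENNReal.toReal_nonneg
  have hξ0 : (0:ℝ) ≤ (ξ {w}).toReal := ENNReal.toReal_nonneg
  have hηs : (η {s}).toReal = 0 := by rw [ηs0]; simp
  have h1 : zeta ξ η w ≤ zeta ξ η w + (η {w}).toReal := by linarith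
  have h2 : zeta ξ η w + (η {w}).toReal
      ≤ zeta ξ η w + (ξ {w}).toReal + (η {w}).toReal := by linarith
  have hzw := le_zeta_of_lt ξ η hsw
  have hrlt : zeta ξ η s + u * (ξ {s}).toReal < zeta ξ η w + (η {w}).toReal := by nlinarith
  have MLξ := ML ξ η ξ (fun x => le_self_add) (Or.inl rfl) hξs hu0 hu1 hsw h1 h2
  have MLη := ML ξ η η (fun x => le_add_self) (Or.inr ηs0) hξs hu0 hu1 hsw h1 h2
  have hTwξ : (ξ {w})⁻¹ * ENNReal.ofReal
      (min (zeta ξ η w + (η {w}).toReal - zeta ξ η w) ((ξ {w}).toReal)) * ξ {w} = 0 := by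
    rcases hatoms w with h0 | h0
    · rw [h0, mul_zero]
    · rw [h0]
      simp
  have hTwη : (η {w})⁻¹ * ENNReal.ofReal
      (min (zeta ξ η w + (η {w}).toReal - zeta ξ η w) ((η {w}).toReal)) * η {w} = η {w} := by
    by_cases h0 : η {w} = 0
    · rw [h0, mul_zero]
    · rw [add_sub_cancel_left, min_self, ENNReal.ofReal_toReal (singleton_ne_top η w),
        inv_mul_mul_cancel h0 (singleton_ne_top η w)]
  have hstarξ : starM ξ η ξ
      (Set.Icc (zeta ξ η s + u * (ξ {s}).toReal) (zeta ξ η w + (η {w}).toReal))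
      = ENNReal.ofReal (1 - u) * ξ {s} + ξ (Set.Ioo s w) := by
    rw [MLξ, hTwξ, add_zero, ofReal_c_eq ξ hu1.le]
  have hstarη : starM ξ η η
      (Set.Icc (zeta ξ η s + u * (ξ {s}).toReal) (zeta ξ η w + (η {w}).toReal))
      = η (Set.Icc s w) := by
    rw [MLη, hTwη, eta_Icc_eq η ηs0 hsw, hηs,
      show (0:ℝ) - u * (ξ {s}).toReal = -(u * (ξ {s}).toReal) by ring,
      ENNReal.ofReal_of_nonpos (neg_nonpos.2 (by positivity)), zero_add]
  refine ⟨⟨hrlt, ?_⟩, ?_⟩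
  · rw [hstarξ, hstarη]
    exact hcond
  · exact zetaInv_of_mem_jump ξ η h1 h2

lemma claim2 {s u : ℝ} (ηs0 : η {s} = 0) (hξs : ξ {s} ≠ 0) (hu0 : 0 ≤ u) (hu1 : u < 1)
    {t : ℝ} (hrt : zeta ξ η s + u * (ξ {s}).toReal < t)
    (hcmp : starM ξ η ξ (Set.Icc (zeta ξ η s + u * (ξ {s}).toReal) t)
      ≤ starM ξ η η (Set.Icc (zeta ξ η s + u * (ξ {s}).toReal) t)) :
    s < zetaInv ξ η t ∧
      ENNReal.ofReal (1 - u) * ξ {s} + ξ (Set.Ioo s (zetaInv ξ η t))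
        ≤ η (Set.Icc s (zetaInv ξ η t)) := by
  have hJpos : 0 < (ξ {s}).toReal := ENNReal.toReal_pos hξs (singleton_ne_top ξ s)
  have hηs : (η {s}).toReal = 0 := by rw [ηs0]; simp
  -- step 1 : e < t
  have het : zeta ξ η s + (ξ {s}).toReal < t := by
    by_contra hc
    push_neg at hc
    have h0 := starM_eta_small ξ η ηs0 hξs hu0 hc
    have h1 := starM_xi_lower ξ η hξs hu0 hrt.le hc
    have : ENNReal.ofReal (t - (zeta ξ η s + u * (ξ {s}).toReal)) = 0 :=
      le_antisymm (le_trans h1 (le_trans hcmp h0.le)) zero_le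
    rw [ENNReal.ofReal_eq_zero] at this
    linarith
  set w := zetaInv ξ η t with hw
  have h1 : zeta ξ η w ≤ t := zeta_zetaInv_le ξ η t
  have h2 : t ≤ zeta ξ η w + (ξ {w}).toReal + (η {w}).toReal := le_zeta_zetaInv_add ξ η t
  have hsw : s < w := by
    rcases lt_trichotomy s w with h | h | h
    · exact h
    · exfalso
      rw [← h] at h2
      rw [hηs] at h2
      linarith
    · exfalso
      have := le_zeta_of_lt ξ η h
      have hη0 : (0:ℝ) ≤ (η {s}).toReal := ENNReal.toReal_nonneg
      have hξw : (0:ℝ) ≤ (ξ {w}).toReal := ENNReal.toReal_nonneg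
      have hηw : (0:ℝ) ≤ (η {w}).toReal := ENNReal.toReal_nonneg
      nlinarith
  have MLξ := ML ξ η ξ (fun x => le_self_add) (Or.inl rfl) hξs hu0 hu1 hsw h1 h2
  have MLη := ML ξ η η (fun x => le_add_self) (Or.inr ηs0) hξs hu0 hu1 hsw h1 h2
  have hlow : ENNReal.ofReal (1 - u) * ξ {s} + ξ (Set.Ioo s w)
      ≤ starM ξ η ξ (Set.Icc (zeta ξ η s + u * (ξ {s}).toReal) t) := by
    rw [MLξ, ofReal_c_eq ξ hu1.le]
    exact le_add_right le_rfl
  have hTwη : (η {w})⁻¹ * ENNReal.ofReal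
      (min (t - zeta ξ η w) ((η {w}).toReal)) * η {w} ≤ η {w} := by
    by_cases h0 : η {w} = 0
    · rw [h0, mul_zero]
    · calc (η {w})⁻¹ * ENNReal.ofReal (min (t - zeta ξ η w) ((η {w}).toReal)) * η {w}
          ≤ (η {w})⁻¹ * η {w} * η {w} := by
            gcongr
            exact le_trans (ENNReal.ofReal_le_ofReal (min_le_right _ _))
              (le_of_eq (ENNReal.ofReal_toReal (singleton_ne_top η w)))
        _ = η {w} := by rw [ENNReal.inv_mul_cancel h0 (singleton_ne_top η w), one_mul]
  have hup : starM ξ η η (Set.Icc (zeta ξ η s + u * (ξ {s}).toReal) t)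
      ≤ η (Set.Icc s w) := by
    rw [MLη, eta_Icc_eq η ηs0 hsw, hηs,
      show (0:ℝ) - u * (ξ {s}).toReal = -(u * (ξ {s}).toReal) by ring,
      ENNReal.ofReal_of_nonpos (neg_nonpos.2 (by positivity)), zero_add]
    exact add_le_add le_rfl hTwη
  exact ⟨hsw, le_trans hlow (le_trans hcmp hup)⟩

end MAIN

/-- `τ^u(s) := inf{t > s : u ξ{s} + ξ((s,t)) ≤ η[s,t]}`, with `inf ∅ = ∞`. -/
noncomputable def tauU (ξ η : Measure ℝ) (u s : ℝ) : EReal :=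
  sInf (Real.toEReal ''
    {t : ℝ | s < t ∧ ENNReal.ofReal u * ξ {s} + ξ (Set.Ioo s t) ≤ η (Set.Icc s t)})

/-- `τ*(r) := inf{t > r : ξ*[r,t] ≤ η*[r,t]}`, with `inf ∅ = ∞`. -/
noncomputable def tauStar (ξ η : Measure ℝ) (r : ℝ) : EReal :=
  sInf (Real.toEReal ''
    {t : ℝ | r < t ∧ starM ξ η ξ (Set.Icc r t) ≤ starM ξ η η (Set.Icc r t)})



lemma sInf_image_ne_top_iff (T : Set ℝ) : sInf (Real.toEReal '' T) ≠ ⊤ ↔ T.Nonempty := by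
  constructor
  · intro h
    by_contra hc
    rw [Set.not_nonempty_iff_eq_empty] at hc
    rw [hc] at h
    simp at h
  · rintro ⟨x, hx⟩
    exact ne_top_of_le_ne_top (EReal.coe_ne_top x) (sInf_le (Set.mem_image_of_mem _ hx))


/-- Lemma 3.5: if `ξ{s} > 0` and `u ∈ [0,1)`, then `τ*(ζ(s) + u ξ{s}) < ∞` iff
`τ^{1-u}(s) < ∞`, and in that case `ζ⁻¹(τ*(ζ(s) + u ξ{s})) = τ^{1-u}(s)`. -/
theorem tauStar_zeta_of_atom (ξ η : Measure ℝ)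
    [IsLocallyFiniteMeasure ξ] [IsLocallyFiniteMeasure η]
    (hsing : ξ ⟂ₘ η) (s : ℝ) (hξs : 0 < ξ {s}) (u : ℝ) (hu0 : 0 ≤ u) (hu1 : u < 1) :
    (tauStar ξ η (zeta ξ η s + u * (ξ {s}).toReal) ≠ ⊤ ↔ tauU ξ η (1 - u) s ≠ ⊤) ∧
      (∀ r : ℝ, tauStar ξ η (zeta ξ η s + u * (ξ {s}).toReal) = (r : EReal) →
        ((zetaInv ξ η r : ℝ) : EReal) = tauU ξ η (1 - u) s) := by
  obtain ⟨E, hEm, hE1, hE2⟩ := hsing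
  have hξsne : ξ {s} ≠ 0 := hξs.ne'
  have hatoms : ∀ x : ℝ, ξ {x} = 0 ∨ η {x} = 0 := by
    intro x
    by_cases hx : x ∈ E
    · left
      exact le_antisymm (le_trans (measure_mono (Set.singleton_subset_iff.2 hx)) hE1.le)
        zero_le
    · right
      exact le_antisymm (le_trans (measure_mono (Set.singleton_subset_iff.2 hx)) hE2.le)
        zero_le
  have ηs0 : η {s} = 0 := (hatoms s).resolve_left hξsne
  set SS : Set ℝ := {t' : ℝ | zeta ξ η s + u * (ξ {s}).toReal < t'
    ∧ starM ξ η ξ (Set.Icc (zeta ξ η s + u * (ξ {s}).toReal) t')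
      ≤ starM ξ η η (Set.Icc (zeta ξ η s + u * (ξ {s}).toReal) t')} with hSS
  set SU : Set ℝ := {w : ℝ | s < w
    ∧ ENNReal.ofReal (1 - u) * ξ {s} + ξ (Set.Ioo s w) ≤ η (Set.Icc s w)} with hSU
  have htauS : tauStar ξ η (zeta ξ η s + u * (ξ {s}).toReal) = sInf (Real.toEReal '' SS) := rfl
  have htauU : tauU ξ η (1 - u) s = sInf (Real.toEReal '' SU) := rfl
  have hfwd : ∀ w ∈ SU, (zeta ξ η w + (η {w}).toReal) ∈ SS
      ∧ zetaInv ξ η (zeta ξ η w + (η {w}).toReal) = w := by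
    intro w hw
    obtain ⟨hsw, hcond⟩ := hw
    obtain ⟨⟨hlt, hle⟩, hinv⟩ := claim1 ξ η ηs0 hatoms hξsne hu0 hu1 hsw hcond
    exact ⟨⟨hlt, hle⟩, hinv⟩
  have hbwd : ∀ t' ∈ SS, zetaInv ξ η t' ∈ SU := by
    intro t' ht'
    obtain ⟨hrt, hcmp⟩ := ht'
    exact claim2 ξ η ηs0 hξsne hu0 hu1 hrt hcmp
  constructor
  · rw [htauS, htauU, sInf_image_ne_top_iff, sInf_image_ne_top_iff]
    constructor
    · rintro ⟨t', ht'⟩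
      exact ⟨_, hbwd t' ht'⟩
    · rintro ⟨w, hw⟩
      exact ⟨_, (hfwd w hw).1⟩
  · intro r₀ hr₀
    set w₀ := zetaInv ξ η r₀ with hw₀
    have hr₀le : ∀ t' ∈ SS, r₀ ≤ t' := by
      intro t' ht'
      have h1 : ((r₀ : ℝ) : EReal) ≤ ((t' : ℝ) : EReal) := by
        rw [← hr₀, htauS]
        exact sInf_le (Set.mem_image_of_mem _ ht')
      exact EReal.coe_le_coe_iff.1 h1
    have hlb : ∀ w ∈ SU, w₀ ≤ w := by
      intro w hw
      obtain ⟨hmem, hinv⟩ := hfwd w hw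
      have := zetaInv_mono ξ η (hr₀le _ hmem)
      rwa [hinv] at this
    have hub : ∀ ε : ℝ, 0 < ε → ∃ w ∈ SU, w < w₀ + ε := by
      intro ε hε
      have hEinf : sInf {v : ℝ | r₀ < zeta ξ η v} = w₀ := by
        apply sInf_sandwich
        · intro v hv
          simp only [Set.mem_Ioi] at hv
          simp only [Set.mem_setOf_eq]
          have h2 := le_zeta_zetaInv_add ξ η r₀
          have h3 := le_zeta_of_lt ξ η hv
          rw [← hw₀] at h2
          linarith
        · intro v hv
          simp only [Set.mem_setOf_eq] at hv
          exact csInf_le (zetaInv_set_bddBelow ξ η r₀) (le_of_lt hv)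
      have hEne : {v : ℝ | r₀ < zeta ξ η v}.Nonempty := by
        refine ⟨w₀ + 1, ?_⟩
        simp only [Set.mem_setOf_eq]
        have h2 := le_zeta_zetaInv_add ξ η r₀
        have h3 := le_zeta_of_lt ξ η (by linarith : w₀ < w₀ + 1)
        rw [← hw₀] at h2
        linarith
      obtain ⟨v, hv, hvlt⟩ := exists_lt_of_csInf_lt hEne
        (by rw [hEinf]; linarith : sInf {v : ℝ | r₀ < zeta ξ η v} < w₀ + ε)
      have hsinflt : sInf (Real.toEReal '' SS) < ((zeta ξ η v : ℝ) : EReal) := by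
        rw [← htauS, hr₀]
        exact EReal.coe_lt_coe_iff.2 hv
      obtain ⟨x, hxmem, hxlt⟩ := sInf_lt_iff.1 hsinflt
      obtain ⟨t', ht'SS, rfl⟩ := hxmem
      have ht'v : t' < zeta ξ η v := EReal.coe_lt_coe_iff.1 hxlt
      refine ⟨zetaInv ξ η t', hbwd t' ht'SS, ?_⟩
      have hm1 : zetaInv ξ η t' ≤ zetaInv ξ η (zeta ξ η v) := zetaInv_mono ξ η ht'v.le
      have hm2 : zetaInv ξ η (zeta ξ η v) ≤ v :=
        csInf_le (zetaInv_set_bddBelow ξ η _) (by simp [Set.mem_setOf_eq])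
      linarith
    rw [htauU]
    refine le_antisymm ?_ ?_
    · apply le_sInf
      rintro x ⟨w, hw, rfl⟩
      exact EReal.coe_le_coe_iff.2 (hlb w hw)
    · by_contra hc
      push_neg at hc
      obtain ⟨q, hq1, hq2⟩ := EReal.exists_between_coe_real hc
      have hq1' : w₀ < q := EReal.coe_lt_coe_iff.1 hq1
      obtain ⟨w, hwSU, hwlt⟩ := hub (q - w₀) (by linarith)
      have : sInf (Real.toEReal '' SU) ≤ ((w : ℝ) : EReal) :=
        sInf_le (Set.mem_image_of_mem _ hwSU)
      have h2 : ((w : ℝ) : EReal) < ((q : ℝ) : EReal) :=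
        EReal.coe_lt_coe_iff.2 (by linarith)
      exact absurd (lt_of_le_of_lt (le_trans this h2.le) hq2) (lt_irrefl _)
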